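/- arXiv:2512.18810 — 11 statements merged into one kernel-verified Lean document; each statement's English description precedes it below -/
import Mathlib

section
/- Let (p_i, q_i) for i in Z and (r_j, s_j) for j in Z be two sequences of integer pairs with p_i*q_{i+1} - q_i*p_{i+1} = 1 and r_j*s_{j+1} - s_j*r_{j+1} = 1 for all i, j. Define u_{i,j} = p_i*s_j - q_i*r_j. Then for all i, j, u_{i,j}*u_{i+1,j+1} - u_{i,j+1}*u_{i+1,j} = 1, i.e., (u_{i,j}) is an SL_2-tiling. -/
/-- Short's construction: a pair of Farey paths yields an SL₂-tiling. -/
theorem sl2_tiling_from_farey_paths (p q r s : ℤ → ℤ)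
    (hp : ∀ i : ℤ, p i * q (i + 1) - q i * p (i + 1) = 1)
    (hr : ∀ j : ℤ, r j * s (j + 1) - s j * r (j + 1) = 1)
    (u : ℤ → ℤ → ℤ) (hu : ∀ i j : ℤ, u i j = p i * s j - q i * r j) :
    ∀ i j : ℤ, u i j * u (i + 1) (j + 1) - u i (j + 1) * u (i + 1) j = 1 := by
  intro i j
  have h1 := hp i
  have h2 := hr j
  simp only [hu]
  nlinarith [h1, h2, mul_comm (p i) (q (i+1))]
end

section
/- Every positive integral SL_2-tiling is tame: if u_{i,j} > 0 are integers with u_{i,j}*u_{i+1,j+1} - u_{i,j+1}*u_{i+1,j} = 1 for all i,j in Z, then every adjacent 3x3 determinant of the matrix (u_{i,j}) vanishes. -/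
/-- Every positive integral SL₂-tiling is tame. -/
theorem positive_sl2_tiling_tame (u : ℤ → ℤ → ℤ)
    (hpos : ∀ i j : ℤ, 0 < u i j)
    (hsl2 : ∀ i j : ℤ, u i j * u (i + 1) (j + 1) - u i (j + 1) * u (i + 1) j = 1) :
    ∀ i j : ℤ,
      u i j * (u (i + 1) (j + 1) * u (i + 2) (j + 2) - u (i + 1) (j + 2) * u (i + 2) (j + 1))
        - u i (j + 1) * (u (i + 1) j * u (i + 2) (j + 2) - u (i + 1) (j + 2) * u (i + 2) j)
        + u i (j + 2) * (u (i + 1) j * u (i + 2) (j + 1) - u (i + 1) (j + 1) * u (i + 2) j)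
      = 0 := by
  intro i j
  have h1 := hsl2 i j
  have h2 := hsl2 (i + 1) j
  have h3 := hsl2 i (j + 1)
  have h4 := hsl2 (i + 1) (j + 1)
  have hc : (0:ℤ) < u (i + 1) (j + 1) := hpos _ _
  have key :
      (u i j * (u (i + 1) (j + 1) * u (i + 2) (j + 2) - u (i + 1) (j + 2) * u (i + 2) (j + 1))
        - u i (j + 1) * (u (i + 1) j * u (i + 2) (j + 2) - u (i + 1) (j + 2) * u (i + 2) j)
        + u i (j + 2) * (u (i + 1) j * u (i + 2) (j + 1) - u (i + 1) (j + 1) * u (i + 2) j))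
        * u (i + 1) (j + 1) = 0 := by
    simp only [show i + 1 + 1 = i + 2 from by ring, show j + 1 + 1 = j + 2 from by ring]
      at h2 h3 h4
    linear_combination
      (u (i+1) (j+1) * u (i+2) (j+2) - u (i+1) (j+2) * u (i+2) (j+1)) * h1 + h4
      - (u (i+1) j * u (i+2) (j+1) - u (i+1) (j+1) * u (i+2) j) * h3 - h2
  rcases mul_eq_zero.mp key with h | h
  · exact h
  · omega
end

section
/- In a positive integral SL_2-tiling, for every i,j the entry u_{i,j} divides u_{i-1,j} + u_{i+1,j}, and u_{i,j} divides u_{i,j-1} + u_{i,j+1}. -/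
/-- In a positive integral SL₂-tiling, each entry divides the sum of its vertical
neighbours and the sum of its horizontal neighbours. -/
theorem sl2_tiling_divisibility (u : ℤ → ℤ → ℤ)
    (hpos : ∀ i j : ℤ, 0 < u i j)
    (hsl2 : ∀ i j : ℤ, u i j * u (i + 1) (j + 1) - u i (j + 1) * u (i + 1) j = 1) :
    ∀ i j : ℤ, u i j ∣ (u (i - 1) j + u (i + 1) j) ∧ u i j ∣ (u i (j - 1) + u i (j + 1)) := by
  intro i j
  have h2 := hsl2 i j
  constructor
  · have h1 := hsl2 (i - 1) j
    rw [sub_add_cancel] at h1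
    have hc : IsCoprime (u i j) (u i (j + 1)) :=
      ⟨-(u (i - 1) (j + 1)), u (i - 1) j, by linear_combination h1⟩
    refine hc.dvd_of_dvd_mul_right ⟨u (i - 1) (j + 1) + u (i + 1) (j + 1), ?_⟩
    linear_combination h1 - h2
  · have h3 := hsl2 i (j - 1)
    rw [sub_add_cancel] at h3
    have hc : IsCoprime (u i j) (u (i + 1) j) :=
      ⟨-(u (i + 1) (j - 1)), u i (j - 1), by linear_combination h3⟩
    refine hc.dvd_of_dvd_mul_right ⟨u (i + 1) (j - 1) + u (i + 1) (j + 1), ?_⟩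
    linear_combination h3 - h2
end

section
/- In a tame positive integral SL_2-tiling, the ratio (u_{i-1,j} + u_{i+1,j}) / u_{i,j} is a positive integer independent of j, and the ratio (u_{i,j-1} + u_{i,j+1}) / u_{i,j} is a positive integer independent of i. -/
private lemma sl2_aux (u : ℤ → ℤ → ℤ)
    (hpos : ∀ i j : ℤ, 0 < u i j)
    (hsl2 : ∀ i j : ℤ, u i j * u (i + 1) (j + 1) - u i (j + 1) * u (i + 1) j = 1) :
    ∀ i : ℤ, ∃ a : ℤ, 0 < a ∧ ∀ j : ℤ, u (i - 1) j + u (i + 1) j = a * u i j := by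
  intro i
  have hkey : ∀ j : ℤ,
      (u (i - 1) j + u (i + 1) j) * u i (j + 1)
        = (u (i - 1) (j + 1) + u (i + 1) (j + 1)) * u i j := by
    intro j
    have h1 := hsl2 (i - 1) j
    rw [sub_add_cancel] at h1
    have h2 := hsl2 i j
    linear_combination h1 - h2
  have hcop : IsCoprime (u i 0) (u i 1) := by
    refine ⟨u (i + 1) 1, -(u (i + 1) 0), ?_⟩
    have := hsl2 i 0
    norm_num at this ⊢
    linarith
  have hdvd : u i 0 ∣ u (i - 1) 0 + u (i + 1) 0 := by
    exact hcop.dvd_of_dvd_mul_right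
      ⟨u (i - 1) 1 + u (i + 1) 1, by have := hkey 0; norm_num at this; linarith⟩
  obtain ⟨a, ha⟩ := hdvd
  have hne : ∀ j : ℤ, u i j ≠ 0 := fun j => (hpos i j).ne'
  have hapos : 0 < a := by
    nlinarith [hpos (i - 1) 0, hpos (i + 1) 0, hpos i 0]
  refine ⟨a, hapos, ?_⟩
  have hstep : ∀ j : ℤ, u (i - 1) j + u (i + 1) j = a * u i j →
      u (i - 1) (j + 1) + u (i + 1) (j + 1) = a * u i (j + 1) := by
    intro j hj
    have h := hkey j
    rw [hj] at h
    have := mul_right_cancel₀ (hne j) (by linarith : (u (i - 1) (j + 1) + u (i + 1) (j + 1)) * u i j = (a * u i (j + 1)) * u i j)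
    exact this
  have hstep' : ∀ j : ℤ, u (i - 1) (j + 1) + u (i + 1) (j + 1) = a * u i (j + 1) →
      u (i - 1) j + u (i + 1) j = a * u i j := by
    intro j hj
    have h := hkey j
    rw [hj] at h
    exact mul_right_cancel₀ (hne (j + 1)) (by linarith : (u (i - 1) j + u (i + 1) j) * u i (j + 1) = (a * u i j) * u i (j + 1))
  intro j
  induction j using Int.induction_on with
  | zero => rw [ha]; ring
  | succ n ih => exact hstep n ih
  | pred n ih => exact hstep' (-(n : ℤ) - 1) (by simpa using ih)

/-- In a tame positive integral SL₂-tiling, the ratio (u_{i-1,j}+u_{i+1,j})/u_{i,j}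
is a positive integer independent of j, and (u_{i,j-1}+u_{i,j+1})/u_{i,j} is a
positive integer independent of i. -/
theorem sl2_tiling_ratios (u : ℤ → ℤ → ℤ)
    (hpos : ∀ i j : ℤ, 0 < u i j)
    (hsl2 : ∀ i j : ℤ, u i j * u (i + 1) (j + 1) - u i (j + 1) * u (i + 1) j = 1)
    (htame : ∀ i j : ℤ,
      u i j * (u (i + 1) (j + 1) * u (i + 2) (j + 2) - u (i + 1) (j + 2) * u (i + 2) (j + 1))
        - u i (j + 1) * (u (i + 1) j * u (i + 2) (j + 2) - u (i + 1) (j + 2) * u (i + 2) j)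
        + u i (j + 2) * (u (i + 1) j * u (i + 2) (j + 1) - u (i + 1) (j + 1) * u (i + 2) j)
      = 0) :
    (∀ i : ℤ, ∃ a : ℤ, 0 < a ∧ ∀ j : ℤ, u (i - 1) j + u (i + 1) j = a * u i j) ∧
    (∀ j : ℤ, ∃ b : ℤ, 0 < b ∧ ∀ i : ℤ, u i (j - 1) + u i (j + 1) = b * u i j) := by
  constructor
  · exact sl2_aux u hpos hsl2
  · intro j
    obtain ⟨b, hb, h⟩ := sl2_aux (fun i j => u j i) (fun i j => hpos j i)
      (fun i j => by have := hsl2 j i; simpa using by linarith) j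
    exact ⟨b, hb, fun i => h i⟩
end

section
/- There is no bi-infinite matrix (u_{i,j})_{i,j in Z} of positive integers with all adjacent 2x2 minors equal to 1 satisfying u_{i,j} = u_{i+m,j} for all i,j, where m is a positive integer. -/
/-- No positive integral SL₂-tiling has a purely vertical translational symmetry. -/
theorem no_vertical_periodic_sl2_tiling (m : ℤ) (hm : 0 < m) :
    ¬ ∃ u : ℤ → ℤ → ℤ,
      (∀ i j : ℤ, 0 < u i j) ∧
      (∀ i j : ℤ, u i j * u (i + 1) (j + 1) - u i (j + 1) * u (i + 1) j = 1) ∧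
      (∀ i j : ℤ, u i j = u (i + m) j) := by
  rintro ⟨u, hpos, hdet, hper⟩
  have hmono : StrictMono (fun i : ℤ => (u i 1 : ℚ) / (u i 0 : ℚ)) := by
    apply strictMono_int_of_lt_succ
    intro i
    have h1 : (0:ℤ) < u i 0 := hpos i 0
    have h2 : (0:ℤ) < u (i+1) 0 := hpos (i+1) 0
    have hd := hdet i 0
    norm_num at hd

    rw [div_lt_div_iff₀ (by exact_mod_cast h1) (by exact_mod_cast h2)]
    have : u i 1 * u (i+1) 0 < u (i+1) 1 * u i 0 := by linarith
    exact_mod_cast this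
  have hlt := hmono hm
  simp only at hlt

  have hper0 : u 0 1 = u m 1 := by simpa using hper 0 1
  have hper1 : u 0 0 = u m 0 := by simpa using hper 0 0
  rw [hper0, hper1] at hlt
  exact lt_irrefl _ hlt
end

section
/- There is no bi-infinite matrix (u_{i,j})_{i,j in Z} of positive integers with all adjacent 2x2 minors equal to 1 satisfying u_{i,j} = u_{i,j+n} for all i,j, where n is a positive integer. -/
/-- No positive integral SL₂-tiling is periodic purely in the column direction. -/
theorem no_horizontal_periodic_sl2_tiling (n : ℤ) (hn : 0 < n) :
    ¬ ∃ u : ℤ → ℤ → ℤ,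
      (∀ i j : ℤ, 0 < u i j) ∧
      (∀ i j : ℤ, u i j * u (i + 1) (j + 1) - u i (j + 1) * u (i + 1) j = 1) ∧
      (∀ i j : ℤ, u i j = u i (j + n)) := by
  rintro ⟨u, hpos, hdet, hper⟩
  -- the "ratio" u 0 j / u 1 j strictly decreases
  have key : ∀ k : ℕ, 0 < k → 0 < u 0 0 * u 1 (k : ℤ) - u 0 (k : ℤ) * u 1 0 := by
    intro k hk
    induction k with
    | zero => omega
    | succ m ih =>
      rcases Nat.eq_zero_or_pos m with hm | hm
      · subst hm
        have h := hdet 0 0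
        push_cast
        norm_num at h ⊢
        omega
      · have A := ih hm
        have B := hdet 0 (m : ℤ)
        norm_num at B
        have hb := hpos 1 0
        have hd := hpos 1 (m : ℤ)
        have hf := hpos 1 ((m : ℤ) + 1)
        push_cast
        nlinarith [mul_pos A hf, mul_pos hb hd, mul_pos hb hf]
  have hk0 : 0 < n.toNat := by omega
  have hcast : ((n.toNat : ℤ)) = n := Int.toNat_of_nonneg hn.le
  have h := key n.toNat hk0
  rw [hcast] at h
  have e0 : u 0 n = u 0 0 := by have := hper 0 0; simpa using this.symm
  have e1 : u 1 n = u 1 0 := by have := hper 1 0; simpa using this.symm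
  rw [e0, e1] at h
  omega
end

section
/- If a positive integral SL_2-tiling admits two Z-linearly independent translational symmetries (i.e., u_{i,j} = u_{i+m1,j+n1} and u_{i,j} = u_{i+m2,j+n2} for all i,j, with (m1,n1) and (m2,n2) linearly independent over Z), then a contradiction follows; hence no positive integral SL_2-tiling has two independent translational symmetries. -/
/-- No positive integral SL₂-tiling has two ℤ-linearly independent translational
symmetries. -/
theorem no_two_independent_symmetries (u : ℤ → ℤ → ℤ)
    (hpos : ∀ i j : ℤ, 0 < u i j)
    (hsl2 : ∀ i j : ℤ, u i j * u (i + 1) (j + 1) - u i (j + 1) * u (i + 1) j = 1)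
    (m1 n1 m2 n2 : ℤ)
    (h1 : ∀ i j : ℤ, u i j = u (i + m1) (j + n1))
    (h2 : ∀ i j : ℤ, u i j = u (i + m2) (j + n2))
    (hindep : m1 * n2 - m2 * n1 ≠ 0) :
    False := by
  have iter : ∀ (m n : ℤ), (∀ i j : ℤ, u i j = u (i + m) (j + n)) →
      ∀ (k i j : ℤ), u i j = u (i + k * m) (j + k * n) := by
    intro m n h k
    induction k using Int.induction_on with
    | zero => intro i j; simp
    | succ k ih =>
        intro i j
        rw [ih i j, h (i + (k : ℤ) * m) (j + (k : ℤ) * n)]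
        congr 1 <;> push_cast <;> ring
    | pred k ih =>
        intro i j
        rw [ih i j]
        have := h (i + (-(k : ℤ) - 1) * m) (j + (-(k : ℤ) - 1) * n)
        have e1 : i + (-(k : ℤ) - 1) * m + m = i + -(k : ℤ) * m := by ring
        have e2 : j + (-(k : ℤ) - 1) * n + n = j + -(k : ℤ) * n := by ring
        rw [e1, e2] at this
        exact this.symm
  set d := m1 * n2 - m2 * n1 with hdef
  have hd : ∀ i j : ℤ, u i j = u (i + d) j := by
    intro i j
    have e1 := iter m1 n1 h1 n2 i j
    have e2 := iter m2 n2 h2 (-n1) (i + n2 * m1) (j + n2 * n1)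
    rw [e1, e2]
    congr 1 <;> ring
  have key : ∀ i : ℤ, ((u i 1 : ℚ) / (u i 0)) < ((u (i + 1) 1 : ℚ) / (u (i + 1) 0)) := by
    intro i
    rw [div_lt_div_iff₀ (by exact_mod_cast hpos i 0) (by exact_mod_cast hpos (i + 1) 0)]
    have h := hsl2 i 0
    norm_num at h
    have hc : (u i 0 : ℚ) * u (i + 1) 1 - u i 1 * u (i + 1) 0 = 1 := by
      exact_mod_cast congrArg (Int.cast : ℤ → ℚ) h
    nlinarith [hc]
  have mono : StrictMono (fun i : ℤ => (u i 1 : ℚ) / (u i 0)) :=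
    strictMono_int_of_lt_succ key
  have heq : (fun i : ℤ => (u i 1 : ℚ) / (u i 0)) 0 = (fun i : ℤ => (u i 1 : ℚ) / (u i 0)) d := by
    simp only
    have a1 := hd 0 1
    have a0 := hd 0 0
    rw [zero_add] at a1 a0
    rw [a1, a0]
  exact hindep (by have := mono.injective heq; omega)
end

section
/- Let u_{i,j} be a tame positive integral SL_2-tiling that is (m,n)-periodic: u_{i,j} = u_{i+m,j+n} for all i,j, with m,n positive integers. Then the quantity (u_{i+m,j} + u_{i,j+n}) / u_{i,j} is a positive integer independent of i and j. -/
private lemma int_ind (P : ℤ → Prop) (h0 : P 0) (hup : ∀ i, P i → P (i+1))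
    (hdn : ∀ i, P i → P (i-1)) : ∀ i, P i := by
  intro i
  induction i using Int.induction_on with
  | zero => exact h0
  | succ k ih => exact hup k ih
  | pred k ih => exact hdn (-k) ih

/-- column recurrence with coefficient a j = u 0 j * u 1 (j+2) - u 0 (j+2) * u 1 j -/
private lemma col_rec (u : ℤ → ℤ → ℤ)
    (hsl2 : ∀ i j : ℤ, u i j * u (i + 1) (j + 1) - u i (j + 1) * u (i + 1) j = 1)
    (htame : ∀ i j : ℤ,
      u i j * (u (i + 1) (j + 1) * u (i + 2) (j + 2) - u (i + 1) (j + 2) * u (i + 2) (j + 1))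
        - u i (j + 1) * (u (i + 1) j * u (i + 2) (j + 2) - u (i + 1) (j + 2) * u (i + 2) j)
        + u i (j + 2) * (u (i + 1) j * u (i + 2) (j + 1) - u (i + 1) (j + 1) * u (i + 2) j)
      = 0) :
    ∀ i j : ℤ, u i (j+2) = (u 0 j * u 1 (j+2) - u 0 (j+2) * u 1 j) * u i (j+1) - u i j := by
  set a : ℤ → ℤ := fun j => u 0 j * u 1 (j+2) - u 0 (j+2) * u 1 j with ha
  show ∀ i j : ℤ, u i (j+2) = a j * u i (j+1) - u i j
  have base0 : ∀ j, u 0 (j+2) = a j * u 0 (j+1) - u 0 j := by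
    intro j
    have h1 := hsl2 0 j
    have h2 := hsl2 0 (j+1)
    simp only [zero_add] at h1 h2
    rw [show (j+1+1:ℤ) = j+2 from by ring] at h2
    simp only [ha]
    linear_combination (-(u 0 (j+2))) * h1 - u 0 j * h2
  have base1 : ∀ j, u 1 (j+2) = a j * u 1 (j+1) - u 1 j := by
    intro j
    have h1 := hsl2 0 j
    have h2 := hsl2 0 (j+1)
    simp only [zero_add] at h1 h2
    rw [show (j+1+1:ℤ) = j+2 from by ring] at h2
    simp only [ha]
    linear_combination (-(u 1 (j+2))) * h1 - u 1 j * h2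
  have stepup : ∀ i j : ℤ, u i (j+2) = a j * u i (j+1) - u i j →
      u (i+1) (j+2) = a j * u (i+1) (j+1) - u (i+1) j →
      u (i+2) (j+2) = a j * u (i+2) (j+1) - u (i+2) j := by
    intro i j hC hF
    have h3 := htame i j
    have hs := hsl2 i j
    linear_combination h3 + (a j * u (i+2) (j+1) - u (i+2) j - u (i+2) (j+2)) * hs
      + (u (i+1) (j+1) * u (i+2) j - u (i+1) j * u (i+2) (j+1)) * hC
      + (u i j * u (i+2) (j+1) - u i (j+1) * u (i+2) j) * hF
  have stepdn : ∀ i j : ℤ, u (i+1) (j+2) = a j * u (i+1) (j+1) - u (i+1) j →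
      u (i+2) (j+2) = a j * u (i+2) (j+1) - u (i+2) j →
      u i (j+2) = a j * u i (j+1) - u i j := by
    intro i j hF hI
    have h3 := htame i j
    have hs := hsl2 (i+1) j
    rw [show (i+1+1:ℤ) = i+2 from by ring] at hs
    linear_combination h3 + (a j * u i (j+1) - u i j - u i (j+2)) * hs
      + (u i (j+1) * u (i+1) j - u i j * u (i+1) (j+1)) * hI
      + (u i j * u (i+2) (j+1) - u i (j+1) * u (i+2) j) * hF
  have main : ∀ i : ℤ, (∀ j, u i (j+2) = a j * u i (j+1) - u i j) ∧
      (∀ j, u (i+1) (j+2) = a j * u (i+1) (j+1) - u (i+1) j) := by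
    refine int_ind _ ⟨base0, by simpa using base1⟩ ?_ ?_
    · rintro i ⟨hA, hB⟩
      refine ⟨hB, fun j => ?_⟩
      rw [show (i+1+1:ℤ) = i+2 from by ring]
      exact stepup i j (hA j) (hB j)
    · rintro i ⟨hA, hB⟩
      have e1 : (i-1+1 : ℤ) = i := by ring
      have e2 : (i-1+2 : ℤ) = i+1 := by ring
      refine ⟨fun j => ?_, fun j => ?_⟩
      · exact stepdn (i-1) j (by rw [e1]; exact hA j) (by rw [e2]; exact hB j)
      · rw [e1]; exact hA j
  exact fun i j => (main i).1 j

private lemma cross (u : ℤ → ℤ → ℤ) (m n : ℤ)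
    (hpos : ∀ i j : ℤ, 0 < u i j)
    (hsl2 : ∀ i j : ℤ, u i j * u (i + 1) (j + 1) - u i (j + 1) * u (i + 1) j = 1)
    (htame : ∀ i j : ℤ,
      u i j * (u (i + 1) (j + 1) * u (i + 2) (j + 2) - u (i + 1) (j + 2) * u (i + 2) (j + 1))
        - u i (j + 1) * (u (i + 1) j * u (i + 2) (j + 2) - u (i + 1) (j + 2) * u (i + 2) j)
        + u i (j + 2) * (u (i + 1) j * u (i + 2) (j + 1) - u (i + 1) (j + 1) * u (i + 2) j)
      = 0)
    (hper : ∀ i j : ℤ, u i j = u (i + m) (j + n)) :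
    ∀ i j : ℤ, u i j * (u (i+m) (j+1) + u i (j+1+n))
      = u i (j+1) * (u (i+m) j + u i (j+n)) := by
  obtain ⟨a, hrec⟩ : ∃ a : ℤ → ℤ, ∀ i j, u i (j+2) = a j * u i (j+1) - u i j :=
    ⟨fun j => u 0 j * u 1 (j+2) - u 0 (j+2) * u 1 j, col_rec u hsl2 htame⟩
  -- a is n-periodic
  have haper : ∀ j, a (j+n) = a j := by
    intro j
    have h1 := hrec 0 (j+n)
    have h2 := hrec (-m) j
    have p0 : u (-m) j = u 0 (j+n) := by
      have := hper (-m) j; rwa [show (-m+m:ℤ) = 0 from by ring] at this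
    have p1 : u (-m) (j+1) = u 0 (j+n+1) := by
      have := hper (-m) (j+1); rwa [show (-m+m:ℤ) = 0 from by ring,
        show (j+1+n:ℤ) = j+n+1 from by ring] at this
    have p2 : u (-m) (j+2) = u 0 (j+n+2) := by
      have := hper (-m) (j+2); rwa [show (-m+m:ℤ) = 0 from by ring,
        show (j+2+n:ℤ) = j+n+2 from by ring] at this
    rw [p0, p1, p2] at h2
    have hz : (a (j+n) - a j) * u 0 (j+n+1) = 0 := by linear_combination h2 - h1
    rcases mul_eq_zero.mp hz with h | h
    · linarith
    · exact absurd h (hpos 0 (j+n+1)).ne'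
  -- determinant of two solutions of the recurrence is constant
  have dconst : ∀ x y : ℤ → ℤ, (∀ j, x (j+2) = a j * x (j+1) - x j) →
      (∀ j, y (j+2) = a j * y (j+1) - y j) →
      ∀ j, x j * y (j+1) - x (j+1) * y j = x 0 * y 1 - x 1 * y 0 := by
    intro x y hx hy
    refine int_ind (fun j => x j * y (j+1) - x (j+1) * y j = x 0 * y 1 - x 1 * y 0)
      (by norm_num) ?_ ?_
    · intro j ih
      rw [show (j+1+1:ℤ) = j+2 from by ring]
      linear_combination ih + x (j+1) * hy j - y (j+1) * hx j
    · intro j ih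
      rw [show (j-1+1:ℤ) = j from by ring]
      have hx' := hx (j-1)
      have hy' := hy (j-1)
      rw [show (j-1+2:ℤ) = j+1 from by ring, show (j-1+1:ℤ) = j from by ring] at hx' hy'
      linear_combination ih + y j * hx' - x j * hy'
  -- E-invariant: determinant of rows i and i+m, constant in j
  have hE : ∀ i j, u i j * u (i+m) (j+1) - u i (j+1) * u (i+m) j
      = u i 0 * u (i+m) 1 - u i 1 * u (i+m) 0 :=
    fun i j => dconst (u i) (u (i+m)) (hrec i) (hrec (i+m)) j
  -- E is m-periodic in i
  have hEshift : ∀ i, u (i-m) 0 * u i 1 - u (i-m) 1 * u i 0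
      = u i 0 * u (i+m) 1 - u i 1 * u (i+m) 0 := by
    intro i
    have h := hE i (-n)
    rw [show (-n+1:ℤ) = 1-n from by ring] at h
    have p0 : u i (-n) = u (i+m) 0 := by
      have := hper i (-n); rwa [show (-n+n:ℤ) = 0 from by ring] at this
    have p1 : u i (1-n) = u (i+m) 1 := by
      have := hper i (1-n); rwa [show (1-n+n:ℤ) = 1 from by ring] at this
    have q0 : u (i-m) (-n) = u i 0 := by
      have := hper (i-m) (-n); rwa [show (i-m+m:ℤ) = i from by ring,
        show (-n+n:ℤ) = 0 from by ring] at this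
    have q1 : u (i-m) (1-n) = u i 1 := by
      have := hper (i-m) (1-n); rwa [show (i-m+m:ℤ) = i from by ring,
        show (1-n+n:ℤ) = 1 from by ring] at this
    have h' := hE (i-m) (-n)
    rw [show (-n+1:ℤ) = 1-n from by ring, show (i-m+m:ℤ) = i from by ring,
      q0, q1, p0, p1] at h'
    rw [p0, p1] at h
    linarith [h, h']
  intro i j
  -- w-row satisfies the recurrence
  have hwrec : ∀ j, u (i+m) (j+2) + u i (j+2+n)
      = a j * (u (i+m) (j+1) + u i (j+1+n)) - (u (i+m) j + u i (j+n)) := by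
    intro j
    have h1 := hrec (i+m) j
    have h2 := hrec i (j+n)
    rw [show (j+n+2:ℤ) = j+2+n from by ring, show (j+n+1:ℤ) = j+1+n from by ring,
      haper j] at h2
    linarith [h1, h2]
  have hD := dconst (u i) (fun j => u (i+m) j + u i (j+n)) (hrec i)
    (by intro j; exact hwrec j) j
  -- the constant is zero
  have r1 : u i (1+n) = u (i-m) 1 := by
    have h := hper (i-m) 1; rw [show (i-m+m:ℤ) = i from by ring] at h; exact h.symm
  have r0 : u i n = u (i-m) 0 := by
    have h := hper (i-m) 0
    rw [show (i-m+m:ℤ) = i from by ring, show ((0:ℤ)+n) = n from by ring] at h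
    exact h.symm
  have hz : u i 0 * (u (i+m) 1 + u i (1+n)) - u i 1 * (u (i+m) 0 + u i n) = 0 := by
    rw [r0, r1]
    linear_combination - hEshift i
  rw [show ((0:ℤ)+n) = n from by ring] at hD
  linear_combination hD + hz

/-- The growth coefficient of an (m,n)-periodic tame positive integral SL₂-tiling:
(u_{i+m,j} + u_{i,j+n}) / u_{i,j} is a positive integer independent of i and j. -/
theorem sl2_tiling_growth (u : ℤ → ℤ → ℤ) (m n : ℤ) (hm : 0 < m) (hn : 0 < n)
    (hpos : ∀ i j : ℤ, 0 < u i j)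
    (hsl2 : ∀ i j : ℤ, u i j * u (i + 1) (j + 1) - u i (j + 1) * u (i + 1) j = 1)
    (htame : ∀ i j : ℤ,
      u i j * (u (i + 1) (j + 1) * u (i + 2) (j + 2) - u (i + 1) (j + 2) * u (i + 2) (j + 1))
        - u i (j + 1) * (u (i + 1) j * u (i + 2) (j + 2) - u (i + 1) (j + 2) * u (i + 2) j)
        + u i (j + 2) * (u (i + 1) j * u (i + 2) (j + 1) - u (i + 1) (j + 1) * u (i + 2) j)
      = 0)
    (hper : ∀ i j : ℤ, u i j = u (i + m) (j + n)) :
    ∃ g : ℤ, 0 < g ∧ ∀ i j : ℤ, u (i + m) j + u i (j + n) = g * u i j := by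
  -- row-direction proportionality
  have hrow : ∀ i j : ℤ, u i j * (u (i+m) (j+1) + u i (j+1+n))
      = u i (j+1) * (u (i+m) j + u i (j+n)) := cross u m n hpos hsl2 htame hper
  -- column-direction proportionality, via transpose
  have hcol : ∀ i j : ℤ, u i j * (u (i+1+m) j + u (i+1) (j+n))
      = u (i+1) j * (u (i+m) j + u i (j+n)) := by
    have h := cross (fun i j => u j i) n m (fun i j => hpos j i)
      (fun i j => by simpa using by linear_combination hsl2 j i)
      (fun i j => by simpa using by linear_combination htame j i)
      (fun i j => hper j i)
    intro i j
    have h' := h j i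
    simpa using by linear_combination h'
  -- ratio constant along column 0
  have hcchain : ∀ i : ℤ, (u (i+m) 0 + u i n) * u 0 0 = (u m 0 + u 0 n) * u i 0 := by
    refine int_ind (fun i => (u (i+m) 0 + u i n) * u 0 0 = (u m 0 + u 0 n) * u i 0) ?_ ?_ ?_
    · norm_num
    · intro i ih
      have hc := hcol i 0
      rw [show ((0:ℤ)+n) = n from by ring] at hc
      have key : u i 0 * ((u (i+1+m) 0 + u (i+1) n) * u 0 0)
          = u i 0 * ((u m 0 + u 0 n) * u (i+1) 0) := by
        linear_combination u 0 0 * hc + u (i+1) 0 * ih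
      exact mul_left_cancel₀ (hpos i 0).ne' key
    · intro i ih
      have hc := hcol (i-1) 0
      rw [show ((0:ℤ)+n) = n from by ring, show (i-1+1:ℤ) = i from by ring] at hc
      have key : u i 0 * ((u (i-1+m) 0 + u (i-1) n) * u 0 0)
          = u i 0 * ((u m 0 + u 0 n) * u (i-1) 0) := by
        linear_combination (-(u 0 0)) * hc + u (i-1) 0 * ih
      exact mul_left_cancel₀ (hpos i 0).ne' key
  -- ratio constant along each row
  have hrchain : ∀ i j : ℤ, (u (i+m) j + u i (j+n)) * u i 0 = (u (i+m) 0 + u i n) * u i j := by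
    intro i
    refine int_ind (fun j => (u (i+m) j + u i (j+n)) * u i 0 = (u (i+m) 0 + u i n) * u i j) ?_ ?_ ?_
    · norm_num
    · intro j ih
      have hc := hrow i j
      have key : u i j * ((u (i+m) (j+1) + u i (j+1+n)) * u i 0)
          = u i j * ((u (i+m) 0 + u i n) * u i (j+1)) := by
        linear_combination u i 0 * hc + u i (j+1) * ih
      exact mul_left_cancel₀ (hpos i j).ne' key
    · intro j ih
      have hc := hrow i (j-1)
      rw [show (j-1+1:ℤ) = j from by ring] at hc
      have key : u i j * ((u (i+m) (j-1) + u i (j-1+n)) * u i 0)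
          = u i j * ((u (i+m) 0 + u i n) * u i (j-1)) := by
        linear_combination (-(u i 0)) * hc + u i (j-1) * ih
      exact mul_left_cancel₀ (hpos i j).ne' key
  -- global: w i j * u 0 0 = w 0 0 * u i j
  have hglob : ∀ i j : ℤ, (u (i+m) j + u i (j+n)) * u 0 0 = (u m 0 + u 0 n) * u i j := by
    intro i j
    have key : ((u (i+m) j + u i (j+n)) * u 0 0) * u i 0
        = ((u m 0 + u 0 n) * u i j) * u i 0 := by
      linear_combination u 0 0 * hrchain i j + u i j * hcchain i
    exact mul_right_cancel₀ (hpos i 0).ne' key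
  -- gcd argument: u 0 0 divides w 0 0
  set W : ℤ := u m 0 + u 0 n with hW
  set U : ℤ := u 0 0 with hU
  have hUpos : 0 < U := hpos 0 0
  have hWpos : 0 < W := by have h1 := hpos m 0; have h2 := hpos 0 n; positivity
  have hgpos : 0 < Int.gcd U W := Int.gcd_pos_iff.mpr (Or.inl hUpos.ne')
  set d : ℤ := (Int.gcd U W : ℤ) with hd
  have hdpos : 0 < d := by rw [hd]; exact_mod_cast hgpos
  set q : ℤ := U / d with hqdef
  set p : ℤ := W / d with hpdef
  have hq : q * d = U := Int.ediv_mul_cancel (Int.gcd_dvd_left U W)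
  have hp : p * d = W := Int.ediv_mul_cancel (Int.gcd_dvd_right U W)
  have hcop : IsCoprime q p :=
    Int.isCoprime_iff_gcd_eq_one.mpr (Int.gcd_div_gcd_div_gcd hgpos)
  have hqdvd : ∀ i j : ℤ, q ∣ u i j := by
    intro i j
    have h := hglob i j
    rw [← hq, ← hp] at h
    have h2 : (u (i+m) j + u i (j+n)) * q = p * u i j :=
      mul_right_cancel₀ hdpos.ne' (by linear_combination h)
    exact hcop.dvd_of_dvd_mul_left ⟨u (i+m) j + u i (j+n), by linarith [h2]⟩
  have hqpos : 0 < q := by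
    have h1 : 0 < q * d := by rw [hq]; exact hUpos
    nlinarith
  have hq1 : q = 1 := by
    have hqd1 : q ∣ 1 := by
      have h := hsl2 0 0
      simp only [zero_add] at h
      exact h ▸ dvd_sub ((hqdvd 0 0).mul_right _) ((hqdvd 0 1).mul_right _)
    exact Int.eq_one_of_dvd_one hqpos.le hqd1
  have hdvd : U ∣ W := by
    have hUd : U = d := by rw [← hq, hq1, one_mul]
    rw [hUd]
    exact Int.gcd_dvd_right U W
  obtain ⟨g, hg⟩ := hdvd
  refine ⟨g, ?_, ?_⟩
  · nlinarith [hWpos, hUpos, hg]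
  · intro i j
    have h := hglob i j
    rw [hg] at h
    have key : U * (u (i+m) j + u i (j+n)) = U * (g * u i j) := by linear_combination h
    exact mul_left_cancel₀ hUpos.ne' key
end

section
/- Let a/b and c/d be reduced fractions with a*d - b*c not equal to 0, and suppose there is a Farey edge {b1/b2, d1/d2} (so |b1*d2 - b2*d1| = 1) such that the four points a/b, b1/b2, c/d, d1/d2 lie in this cyclic order on the circle, with all the determinants det(a,b1), det(c,d1), det(a,d1), det(b1,c) positive integers. Then det(a,c) = det(a,b1)*det(c,d1) + det(a,d1)*det(b1,c) >= det(a,b1) + 1. -/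
/-- The 2×2 determinant of two integer vectors. -/
def det2 (x y : ℤ × ℤ) : ℤ := x.1 * y.2 - x.2 * y.1

/-- Inductive step of Lemma on Farey determinants: if {b₁, d₁} is a Farey edge
(in the cyclic order a, b₁, c, d₁ on the circle, so det2 b₁ d₁ = 1) and the four
determinants det2 a b₁, det2 c d₁, det2 a d₁, det2 b₁ c are positive integers,
then det2 a c = det2 a b₁ * det2 c d₁ + det2 a d₁ * det2 b₁ c ≥ det2 a b₁ + 1. -/
theorem farey_inductive_step (a b1 c d1 : ℤ × ℤ)
    (hac : det2 a c ≠ 0)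
    (hedge : det2 b1 d1 = 1)
    (h1 : 0 < det2 a b1) (h2 : 0 < det2 c d1)
    (h3 : 0 < det2 a d1) (h4 : 0 < det2 b1 c) :
    det2 a c = det2 a b1 * det2 c d1 + det2 a d1 * det2 b1 c ∧
    det2 a b1 + 1 ≤ det2 a c := by
  have key : det2 a c * det2 b1 d1 =
      det2 a b1 * det2 c d1 + det2 a d1 * det2 b1 c := by
    simp only [det2]; ring
  rw [hedge, mul_one] at key
  refine ⟨key, ?_⟩
  rw [key]
  nlinarith
end

section
/- Let u_{i,j} be a tame bi-infinite matrix over a field with all adjacent 2x2 minors equal to 1, and suppose there exist indices i0 and a constant lambda such that u_{i0+1,j} = lambda*u_{i0,j} - u_{i0-1,j} for all j (the linear recurrence from tameness). If lambda = 1, then u_{i0,j} = u_{i0-1,j} + u_{i0+1,j} for all j, and deleting row i0 from the matrix yields a matrix that still has all adjacent 2x2 minors equal to 1. -/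
/-- Row removal in a tame SL₂-tiling over a field: if row i₀ satisfies the linear
recurrence with λ = 1, i.e. u_{i₀,j} = u_{i₀-1,j} + u_{i₀+1,j}, then deleting row
i₀ preserves the SL₂ condition on adjacent 2×2 minors. -/
theorem row_removal_lambda_one {K : Type*} [Field K] (u : ℤ → ℤ → K)
    (hsl2 : ∀ i j : ℤ, u i j * u (i + 1) (j + 1) - u i (j + 1) * u (i + 1) j = 1)
    (i0 : ℤ) (lam : K)
    (hrec : ∀ j : ℤ, u (i0 + 1) j = lam * u i0 j - u (i0 - 1) j)
    (hlam : lam = 1)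
    (u' : ℤ → ℤ → K)
    (hu' : ∀ i j : ℤ, u' i j = if i < i0 then u i j else u (i + 1) j) :
    (∀ j : ℤ, u i0 j = u (i0 - 1) j + u (i0 + 1) j) ∧
    (∀ i j : ℤ, u' i j * u' (i + 1) (j + 1) - u' i (j + 1) * u' (i + 1) j = 1) := by
  subst hlam
  refine ⟨fun j => by rw [hrec j]; ring, ?_⟩
  intro i j
  rw [hu' i j, hu' (i+1) (j+1), hu' i (j+1), hu' (i+1) j]
  rcases lt_trichotomy (i+1) i0 with h | h | h
  · simp only [if_pos (by omega : i < i0), if_pos h]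
    exact hsl2 i j
  · simp only [if_pos (by omega : i < i0), if_neg (by omega : ¬ i+1 < i0)]
    subst h
    have hr1 := hrec (j+1); have hr2 := hrec j
    rw [show i+1-1 = i from by ring] at hr1 hr2
    rw [hr1, hr2]
    linear_combination hsl2 i j
  · simp only [if_neg (by omega : ¬ i < i0), if_neg (by omega : ¬ i+1 < i0)]
    exact hsl2 (i+1) j
end

section
/- Let (u_{i,j}) be a tame SL_2-tiling of positive integers that is (m,n)-periodic (u_{i,j} = u_{i+m,j+n}, m,n > 0). Define a_i = (u_{i-1,j0} + u_{i+1,j0}) / u_{i,j0} for fixed j0. Then each a_i is a positive integer, a_i does not depend on j0, and a_{i+m} = a_i for all i. -/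
/-- Quiddity sequence of an (m,n)-periodic tame positive integral SL₂-tiling:
a_i = (u_{i-1,j} + u_{i+1,j}) / u_{i,j} is a positive integer, independent of the
column j, and m-periodic in i. -/
theorem sl2_tiling_quiddity (u : ℤ → ℤ → ℤ) (m n : ℤ) (hm : 0 < m) (hn : 0 < n)
    (hpos : ∀ i j : ℤ, 0 < u i j)
    (hsl2 : ∀ i j : ℤ, u i j * u (i + 1) (j + 1) - u i (j + 1) * u (i + 1) j = 1)
    (htame : ∀ i j : ℤ,
      u i j * (u (i + 1) (j + 1) * u (i + 2) (j + 2) - u (i + 1) (j + 2) * u (i + 2) (j + 1))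
        - u i (j + 1) * (u (i + 1) j * u (i + 2) (j + 2) - u (i + 1) (j + 2) * u (i + 2) j)
        + u i (j + 2) * (u (i + 1) j * u (i + 2) (j + 1) - u (i + 1) (j + 1) * u (i + 2) j)
      = 0)
    (hper : ∀ i j : ℤ, u i j = u (i + m) (j + n)) :
    ∃ a : ℤ → ℤ,
      (∀ i : ℤ, 0 < a i) ∧
      (∀ i j : ℤ, u (i - 1) j + u (i + 1) j = a i * u i j) ∧
      (∀ i : ℤ, a (i + m) = a i) := by
  have hne : ∀ i j : ℤ, u i j ≠ 0 := fun i j => (hpos i j).ne'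
  -- cross relation: the ratio is column-independent between adjacent columns
  have cross : ∀ i j : ℤ,
      (u (i - 1) j + u (i + 1) j) * u i (j + 1)
        = (u (i - 1) (j + 1) + u (i + 1) (j + 1)) * u i j := by
    intro i j
    have h1 := hsl2 (i - 1) j
    have h2 := hsl2 i j
    rw [sub_add_cancel] at h1
    linarith
  -- column independence relative to column 0
  have const : ∀ i j : ℤ,
      (u (i - 1) j + u (i + 1) j) * u i 0 = (u (i - 1) 0 + u (i + 1) 0) * u i j := by
    intro i j
    induction j using Int.induction_on with
    | zero => ring
    | succ k ih =>
      have hc := cross i k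
      exact mul_right_cancel₀ (hne i k)
        (by linear_combination u i (k + 1) * ih - u i 0 * hc)
    | pred k ih =>
      have hc := cross i (-(k : ℤ) - 1)
      have e : -(k : ℤ) - 1 + 1 = -(k : ℤ) := by ring
      rw [e] at hc
      exact mul_right_cancel₀ (hne i (-(k : ℤ)))
        (by linear_combination u i 0 * hc + u i (-(k : ℤ) - 1) * ih)
  -- coprimality of consecutive entries in a row
  have hcop : ∀ i j : ℤ, IsCoprime (u i j) (u i (j + 1)) := by
    intro i j
    have h1 := hsl2 (i - 1) j
    rw [sub_add_cancel] at h1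
    exact ⟨-u (i - 1) (j + 1), u (i - 1) j, by linarith⟩
  -- divisibility at column 0
  have hdvd : ∀ i : ℤ, u i 0 ∣ (u (i - 1) 0 + u (i + 1) 0) := by
    intro i
    have h := cross i 0
    have h' : u i 0 ∣ (u (i - 1) 0 + u (i + 1) 0) * u i (0 + 1) :=
      ⟨u (i - 1) (0 + 1) + u (i + 1) (0 + 1), by linear_combination h⟩
    exact (hcop i 0).dvd_of_dvd_mul_right h'
  set a : ℤ → ℤ := fun i => (u (i - 1) 0 + u (i + 1) 0) / u i 0 with ha
  have hdef : ∀ i : ℤ, a i * u i 0 = u (i - 1) 0 + u (i + 1) 0 := by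
    intro i
    simpa [ha] using Int.ediv_mul_cancel (hdvd i)
  have hmain : ∀ i j : ℤ, u (i - 1) j + u (i + 1) j = a i * u i j := by
    intro i j
    refine mul_right_cancel₀ (hne i 0) ?_
    calc (u (i - 1) j + u (i + 1) j) * u i 0
        = (u (i - 1) 0 + u (i + 1) 0) * u i j := const i j
      _ = a i * u i 0 * u i j := by rw [hdef]
      _ = a i * u i j * u i 0 := by ring
  refine ⟨a, ?_, hmain, ?_⟩
  · intro i
    have h := hdef i
    have hsum : 0 < u (i - 1) 0 + u (i + 1) 0 := by
      have := hpos (i - 1) 0; have := hpos (i + 1) 0; linarith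
    rw [← h] at hsum
    nlinarith [hpos i 0]
  · intro i
    refine mul_right_cancel₀ (hne (i + m) n) ?_
    have h1 : u (i - 1) 0 = u (i + m - 1) n := by
      have := hper (i - 1) 0
      rw [this]; ring_nf
    have h2 : u (i + 1) 0 = u (i + m + 1) n := by
      have := hper (i + 1) 0
      rw [this]; ring_nf
    have h3 : u i 0 = u (i + m) n := by
      have := hper i 0
      rw [this]; ring_nf
    calc a (i + m) * u (i + m) n
        = u (i + m - 1) n + u (i + m + 1) n := (hmain (i + m) n).symm
      _ = u (i - 1) 0 + u (i + 1) 0 := by rw [h1, h2]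
      _ = a i * u i 0 := hdef i |>.symm
      _ = a i * u (i + m) n := by rw [h3]
end
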